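/- Let P be a finite poset on [d] whose Hasse diagram is a forest (acyclic poset). Then for every edge partition ℓ of the cover relations of P, every vertex of the order-chain polytope OC_ℓ(P) = O(P'_ℓ) ∩ C(P''_ℓ) has integer coordinates (in fact, all coordinates in {0,1}). -/

import Mathlib

/-- `b` covers `a` in the partial order `r`. -/
def covRel {α : Type*} (r : α → α → Prop) (a b : α) : Prop :=
  r a b ∧ a ≠ b ∧ ∀ c, r a c → r c b → c = a ∨ c = b

/-- The partial order generated by a set of (cover) relations `e`. -/
def genOrd {d : ℕ} (e : Fin d → Fin d → Prop) : Fin d → Fin d → Prop :=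
  Relation.ReflTransGen e

/-- The order polytope of a partial order `r` on `Fin d`. -/
def orderPolytope {d : ℕ} (r : Fin d → Fin d → Prop) : Set (Fin d → ℝ) :=
  {x | (∀ i, 0 ≤ x i ∧ x i ≤ 1) ∧ ∀ i j, r i j → x j ≤ x i}

/-- The chain polytope of a partial order `r` on `Fin d`. -/
def chainPolytope {d : ℕ} (r : Fin d → Fin d → Prop) : Set (Fin d → ℝ) :=
  {x | (∀ i, 0 ≤ x i) ∧
    ∀ C : Finset (Fin d), IsMaxChain r (C : Set (Fin d)) → ∑ i ∈ C, x i ≤ 1}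

/-- The Hasse diagram of `r`, as an undirected simple graph. -/
def hasseGraph {d : ℕ} (r : Fin d → Fin d → Prop) : SimpleGraph (Fin d) where
  Adj a b := (covRel r a b ∨ covRel r b a) ∧ a ≠ b
  symm := ⟨fun _ _ h => ⟨h.1.symm, h.2.symm⟩⟩
  loopless := ⟨fun _ h => h.2 rfl⟩

namespace OC15

open Relation Finset

variable {d : ℕ}

/-- order-edges -/
def oE (r : Fin d → Fin d → Prop) (ℓ : Fin d → Fin d → Bool) (a b : Fin d) : Prop :=
  covRel r a b ∧ ℓ a b = true

/-- chain-edges -/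
def cE (r : Fin d → Fin d → Prop) (ℓ : Fin d → Fin d → Bool) (a b : Fin d) : Prop :=
  covRel r a b ∧ ℓ a b = false

/-- the order generated by the chain-edges -/
def rC (r : Fin d → Fin d → Prop) (ℓ : Fin d → Fin d → Bool) : Fin d → Fin d → Prop :=
  Relation.ReflTransGen (cE r ℓ)

/-- connectivity in the Hasse graph avoiding vertex `i` -/
def Ri (r : Fin d → Fin d → Prop) (i : Fin d) : Fin d → Fin d → Prop :=
  Relation.ReflTransGen (fun a b => (hasseGraph r).Adj a b ∧ a ≠ i ∧ b ≠ i)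

open Classical in
/-- cut value at `j` for the "vertex edge" at `i`:  0 on the lower side, 1 elsewhere -/
noncomputable def ci (r : Fin d → Fin d → Prop) (ℓ : Fin d → Fin d → Bool) (i j : Fin d) : ℝ :=
  if ∃ u, cE r ℓ u i ∧ Ri r i u j then 0 else 1

open Classical in
noncomputable def chi (r : Fin d → Fin d → Prop) (ℓ : Fin d → Fin d → Bool) (i : Fin d)
    (x : Fin d × Bool) : ℝ :=
  if x.1 = i then (if x.2 then 1 else 0) else ci r ℓ i x.1

/-- the potential function on split nodes -/
noncomputable def mu (r : Fin d → Fin d → Prop) (ℓ : Fin d → Fin d → Bool) (v : Fin d → ℝ)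
    (x : Fin d × Bool) : ℝ :=
  ∑ i, v i * chi r ℓ i x

/-- basic gluing relations among split nodes -/
def glueBase (r : Fin d → Fin d → Prop) (ℓ : Fin d → Fin d → Bool) (v : Fin d → ℝ) :
    (Fin d × Bool) → (Fin d × Bool) → Prop := fun x y =>
  (∃ i, (v i = 0 ∨ v i = 1) ∧ x = (i, false) ∧ y = (i, true)) ∨
  (∃ u w, cE r ℓ u w ∧ x = (u, true) ∧ y = (w, false)) ∨
  (∃ u w, oE r ℓ u w ∧ v u = v w ∧
    ((x = (u, true) ∧ y = (w, true)) ∨ (x = (u, false) ∧ y = (w, false)))) ∨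
  (∃ C : Finset (Fin d), ∃ b t, IsMaxChain (rC r ℓ) (C : Set (Fin d)) ∧
    (∑ i ∈ C, v i) = 1 ∧ b ∈ C ∧ t ∈ C ∧
    (∀ c ∈ C, rC r ℓ b c) ∧ (∀ c ∈ C, rC r ℓ c t) ∧ x = (b, false) ∧ y = (t, true))

def glueAdj (r : Fin d → Fin d → Prop) (ℓ : Fin d → Fin d → Bool) (v : Fin d → ℝ) :
    (Fin d × Bool) → (Fin d × Bool) → Prop := fun x y =>
  glueBase r ℓ v x y ∨ glueBase r ℓ v y x

def glue (r : Fin d → Fin d → Prop) (ℓ : Fin d → Fin d → Bool) (v : Fin d → ℝ) :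
    (Fin d × Bool) → (Fin d × Bool) → Prop :=
  Relation.ReflTransGen (glueAdj r ℓ v)

section Lemmas

variable {r : Fin d → Fin d → Prop} {ℓ : Fin d → Fin d → Bool} {v : Fin d → ℝ}

lemma glueAdj_symm : Symmetric (glueAdj r ℓ v) := fun _ _ h => h.symm

lemma glue_symm {x y : Fin d × Bool} (h : glue r ℓ v x y) : glue r ℓ v y x :=
  (@Relation.ReflTransGen.stdSymm _ _ ⟨fun _ _ h' => glueAdj_symm h'⟩).symm _ _ h

lemma cE_adj {a b : Fin d} (h : cE r ℓ a b) : (hasseGraph r).Adj a b :=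
  show (_ ∨ _) ∧ _ from ⟨Or.inl h.1, h.1.2.1⟩

lemma oE_adj {a b : Fin d} (h : oE r ℓ a b) : (hasseGraph r).Adj a b :=
  show (_ ∨ _) ∧ _ from ⟨Or.inl h.1, h.1.2.1⟩

lemma rC_le_r (hpo : IsPartialOrder (Fin d) r) {a b : Fin d} (h : rC r ℓ a b) : r a b := by
  induction h with
  | refl => exact hpo.refl a
  | tail _ hbc ih => exact hpo.trans _ _ _ ih hbc.1.1

lemma rC_antisymm (hpo : IsPartialOrder (Fin d) r) {a b : Fin d}
    (h1 : rC r ℓ a b) (h2 : rC r ℓ b a) : a = b :=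
  hpo.antisymm _ _ (rC_le_r hpo h1) (rC_le_r hpo h2)

lemma not_cE_of_cE (hpo : IsPartialOrder (Fin d) r) {a b : Fin d} (h : cE r ℓ a b) :
    ¬ cE r ℓ b a := by
  intro h'
  exact h.1.2.1 (hpo.antisymm _ _ h.1.1 h'.1.1)

lemma not_cE_of_oE (hpo : IsPartialOrder (Fin d) r) {a b : Fin d} (h : oE r ℓ a b) :
    ¬ cE r ℓ b a := by
  intro h'
  exact h.1.2.1 (hpo.antisymm _ _ h.1.1 h'.1.1)

lemma not_cE_of_oE' {a b : Fin d} (h : oE r ℓ a b) : ¬ cE r ℓ a b := by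
  intro h'
  have h1 := h.2
  have h2 := h'.2
  rw [h1] at h2
  simp at h2

/-- covers of the generated order are generators -/
lemma cover_rC (hpo : IsPartialOrder (Fin d) r) {a b : Fin d}
    (h : covRel (rC r ℓ) a b) : cE r ℓ a b := by
  obtain ⟨hab, hne, hmin⟩ := h
  rcases Relation.ReflTransGen.cases_head hab with rfl | ⟨m, hm, hmb⟩
  · exact absurd rfl hne
  · rcases hmin m (Relation.ReflTransGen.single hm) hmb with rfl | rfl
    · exact absurd rfl hm.1.2.1
    · exact hm

lemma walk_avoiding {i x y : Fin d} (h : Ri r i x y) (hx : x ≠ i) :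
    ∃ p : (hasseGraph r).Walk x y, ∀ z ∈ p.support, z ≠ i := by
  induction h with
  | refl =>
    refine ⟨SimpleGraph.Walk.nil, ?_⟩
    intro z hz
    simp only [SimpleGraph.Walk.support_nil, List.mem_singleton] at hz
    subst hz
    exact hx
  | tail _ hadj ih =>
    obtain ⟨p, hp⟩ := ih
    refine ⟨p.concat hadj.1, ?_⟩
    intro z hz
    rw [SimpleGraph.Walk.support_concat, List.mem_append] at hz
    rcases hz with hz | hz
    · exact hp z hz
    · simp only [List.mem_singleton] at hz
      subst hz
      exact hadj.2.2

/-- key acyclicity lemma: two distinct neighbours of `i` cannot be joined avoiding `i`. -/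
lemma lemX (hforest : (hasseGraph r).IsAcyclic) {i a b : Fin d}
    (ha : (hasseGraph r).Adj i a) (hb : (hasseGraph r).Adj i b)
    (hab : a ≠ b) (h : Ri r i a b) : False := by
  classical
  obtain ⟨p, hp⟩ := walk_avoiding h ha.ne'
  set p1 : (hasseGraph r).Path a b := ⟨p.bypass, p.bypass_isPath⟩ with hp1
  have hpath2 : ((SimpleGraph.Walk.cons ha.symm
      (SimpleGraph.Walk.cons hb SimpleGraph.Walk.nil)) : (hasseGraph r).Walk a b).IsPath := by
    rw [SimpleGraph.Walk.isPath_def]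
    simp only [SimpleGraph.Walk.support_cons, SimpleGraph.Walk.support_nil]
    refine List.nodup_cons.mpr ⟨?_, List.nodup_cons.mpr ⟨?_, List.nodup_singleton _⟩⟩
    · intro hmem
      rcases List.mem_cons.mp hmem with h1 | h1
      · exact ha.ne' h1
      · rw [List.mem_singleton] at h1
        exact hab h1
    · rw [List.mem_singleton]
      exact hb.ne
  set p2 : (hasseGraph r).Path a b := ⟨_, hpath2⟩ with hp2
  have heq : p1 = p2 := SimpleGraph.isAcyclic_iff_path_unique.mp hforest p1 p2
  have hsup : p.bypass.support
      = (SimpleGraph.Walk.cons ha.symm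
          (SimpleGraph.Walk.cons hb SimpleGraph.Walk.nil)).support := by
    have := congrArg (fun q : (hasseGraph r).Path a b => (q : (hasseGraph r).Walk a b).support) heq
    simpa [hp1, hp2] using this
  have hi1 : i ∈ p.bypass.support := by
    rw [hsup]
    simp
  exact hp i (p.support_bypass_subset hi1) rfl

lemma ci_eq_zero {i u : Fin d} (h : cE r ℓ u i) : ci r ℓ i u = 0 :=
  if_pos ⟨u, h, Relation.ReflTransGen.refl⟩

lemma ci_eq_one (hforest : (hasseGraph r).IsAcyclic) {i w : Fin d}
    (hadj : (hasseGraph r).Adj i w) (hnc : ¬ cE r ℓ w i) : ci r ℓ i w = 1 := by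
  rw [ci, if_neg]
  rintro ⟨u, hu, hR⟩
  have hne : u ≠ w := by
    rintro rfl
    exact hnc hu
  have hadju : (hasseGraph r).Adj i u := show (_ ∨ _) ∧ _ from ⟨Or.inr hu.1, (hu.1.2.1).symm⟩
  exact lemX hforest hadju hadj hne hR

lemma ci_edge (hforest : (hasseGraph r).IsAcyclic) {i p q : Fin d}
    (hadj : (hasseGraph r).Adj p q) (hp : p ≠ i) (hq : q ≠ i) :
    ci r ℓ i p = ci r ℓ i q := by
  have hiff : (∃ u, cE r ℓ u i ∧ Ri r i u p) ↔ (∃ u, cE r ℓ u i ∧ Ri r i u q) := by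
    constructor
    · rintro ⟨u, hu, hR⟩
      exact ⟨u, hu, hR.tail ⟨hadj, hp, hq⟩⟩
    · rintro ⟨u, hu, hR⟩
      exact ⟨u, hu, hR.tail ⟨hadj.symm, hq, hp⟩⟩
  unfold ci
  split_ifs with h1 h2 h2
  · rfl
  · exact absurd (hiff.mp h1) h2
  · exact absurd (hiff.mpr h2) h1
  · rfl

lemma chi_self_true (i : Fin d) : chi r ℓ i (i, true) = 1 := by simp [chi]

lemma chi_self_false (i : Fin d) : chi r ℓ i (i, false) = 0 := by simp [chi]

lemma chi_other {i j : Fin d} (h : j ≠ i) (s : Bool) : chi r ℓ i (j, s) = ci r ℓ i j := by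
  simp [chi, h]

/-- D1 : difference across a vertex edge -/
lemma mu_vertex (j : Fin d) : mu r ℓ v (j, true) - mu r ℓ v (j, false) = v j := by
  unfold mu
  rw [← Finset.sum_sub_distrib, Finset.sum_eq_single j]
  · rw [chi_self_true, chi_self_false]
    ring
  · intro i _ hij
    rw [chi_other (Ne.symm hij), chi_other (Ne.symm hij)]
    ring
  · intro hj
    exact absurd (Finset.mem_univ j) hj

/-- D2 : the potential is glued along chain-edges -/
lemma mu_cE (hpo : IsPartialOrder (Fin d) r) (hforest : (hasseGraph r).IsAcyclic)
    {u w : Fin d} (h : cE r ℓ u w) : mu r ℓ v (w, false) = mu r ℓ v (u, true) := by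
  unfold mu
  apply Finset.sum_congr rfl
  intro i _
  have huw : u ≠ w := h.1.2.1
  by_cases hiu : i = u
  · subst hiu
    rw [chi_self_true, chi_other (Ne.symm huw), ci_eq_one hforest (cE_adj h) (not_cE_of_cE hpo h)]
  · by_cases hiw : i = w
    · subst hiw
      rw [chi_self_false, chi_other huw, ci_eq_zero h]
    · rw [chi_other (fun hh => hiw hh.symm), chi_other (fun hh => hiu hh.symm),
        ci_edge hforest (cE_adj h).symm (fun hh => hiw hh.symm) (fun hh => hiu hh.symm)]

/-- D3+, no tightness needed -/
lemma mu_oE_plus (hpo : IsPartialOrder (Fin d) r) (hforest : (hasseGraph r).IsAcyclic)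
    {u w : Fin d} (h : oE r ℓ u w) : mu r ℓ v (w, true) = mu r ℓ v (u, true) := by
  unfold mu
  apply Finset.sum_congr rfl
  intro i _
  have huw : u ≠ w := h.1.2.1
  by_cases hiu : i = u
  · subst hiu
    rw [chi_self_true, chi_other (Ne.symm huw), ci_eq_one hforest (oE_adj h) (not_cE_of_oE hpo h)]
  · by_cases hiw : i = w
    · subst hiw
      rw [chi_self_true, chi_other huw, ci_eq_one hforest (oE_adj h).symm (not_cE_of_oE' h)]
    · rw [chi_other (fun hh => hiw hh.symm), chi_other (fun hh => hiu hh.symm),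
        ci_edge hforest (oE_adj h).symm (fun hh => hiw hh.symm) (fun hh => hiu hh.symm)]

/-- D3−, needs tightness -/
lemma mu_oE_minus (hpo : IsPartialOrder (Fin d) r) (hforest : (hasseGraph r).IsAcyclic)
    {u w : Fin d} (h : oE r ℓ u w) (hvv : v u = v w) :
    mu r ℓ v (w, false) = mu r ℓ v (u, false) := by
  classical
  have huw : u ≠ w := h.1.2.1
  have key : ∑ i, (v i * chi r ℓ i (w, false) - v i * chi r ℓ i (u, false)) = 0 := by
    rw [← Finset.sum_subset (Finset.subset_univ ({u, w} : Finset (Fin d)))]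
    · rw [Finset.sum_pair huw]
      rw [chi_self_false, chi_other (Ne.symm huw), chi_self_false, chi_other huw,
        ci_eq_one hforest (oE_adj h) (not_cE_of_oE hpo h),
        ci_eq_one hforest (oE_adj h).symm (not_cE_of_oE' h)]
      rw [hvv]
      ring
    · intro i _ hi
      simp only [Finset.mem_insert, Finset.mem_singleton, not_or] at hi
      rw [chi_other (fun hh => hi.2 hh.symm), chi_other (fun hh => hi.1 hh.symm),
        ci_edge hforest (oE_adj h).symm (fun hh => hi.2 hh.symm) (fun hh => hi.1 hh.symm)]
      ring
  rw [Finset.sum_sub_distrib] at key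
  unfold mu
  linarith

lemma chain_min (hpo : IsPartialOrder (Fin d) r) {C : Finset (Fin d)}
    (hne : C.Nonempty) (hch : IsChain (rC r ℓ) (C : Set (Fin d))) :
    ∃ b ∈ C, ∀ c ∈ C, rC r ℓ b c := by
  classical
  induction C using Finset.induction_on with
  | empty => exact absurd hne (by simp)
  | @insert a s ha ih =>
    by_cases hs : s.Nonempty
    · have hchs : IsChain (rC r ℓ) (s : Set (Fin d)) := by
        refine IsChain.mono ?_ hch
        intro z hz
        simp only [Finset.coe_insert, Set.mem_insert_iff]
        exact Or.inr hz
      obtain ⟨b', hb's, hb'min⟩ := ih hs hchs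
      have hab' : a ≠ b' := by
        rintro rfl
        exact ha hb's
      have hcomp := hch (by simp) (by simp [hb's]) hab'
      rcases hcomp with hc | hc
      · refine ⟨a, Finset.mem_insert_self a s, ?_⟩
        intro c hc'
        rcases Finset.mem_insert.mp hc' with rfl | hc'
        · exact Relation.ReflTransGen.refl
        · exact hc.trans (hb'min c hc')
      · refine ⟨b', Finset.mem_insert_of_mem hb's, ?_⟩
        intro c hc'
        rcases Finset.mem_insert.mp hc' with rfl | hc'
        · exact hc
        · exact hb'min c hc'
    · rw [Finset.not_nonempty_iff_eq_empty] at hs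
      subst hs
      refine ⟨a, Finset.mem_insert_self a _, ?_⟩
      intro c hc'
      rcases Finset.mem_insert.mp hc' with rfl | hc'
      · exact Relation.ReflTransGen.refl
      · exact absurd hc' (by simp)

lemma chain_max (hpo : IsPartialOrder (Fin d) r) {C : Finset (Fin d)}
    (hne : C.Nonempty) (hch : IsChain (rC r ℓ) (C : Set (Fin d))) :
    ∃ t ∈ C, ∀ c ∈ C, rC r ℓ c t := by
  classical
  induction C using Finset.induction_on with
  | empty => exact absurd hne (by simp)
  | @insert a s ha ih =>
    by_cases hs : s.Nonempty
    · have hchs : IsChain (rC r ℓ) (s : Set (Fin d)) := by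
        refine IsChain.mono ?_ hch
        intro z hz
        simp only [Finset.coe_insert, Set.mem_insert_iff]
        exact Or.inr hz
      obtain ⟨t', ht's, ht'max⟩ := ih hs hchs
      have hat' : a ≠ t' := by
        rintro rfl
        exact ha ht's
      have hcomp := hch (by simp) (by simp [ht's]) hat'
      rcases hcomp with hc | hc
      · refine ⟨t', Finset.mem_insert_of_mem ht's, ?_⟩
        intro c hc'
        rcases Finset.mem_insert.mp hc' with rfl | hc'
        · exact hc
        · exact ht'max c hc'
      · refine ⟨a, Finset.mem_insert_self a s, ?_⟩
        intro c hc'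
        rcases Finset.mem_insert.mp hc' with rfl | hc'
        · exact Relation.ReflTransGen.refl
        · exact (ht'max c hc').trans hc
    · rw [Finset.not_nonempty_iff_eq_empty] at hs
      subst hs
      refine ⟨a, Finset.mem_insert_self a _, ?_⟩
      intro c hc'
      rcases Finset.mem_insert.mp hc' with rfl | hc'
      · exact Relation.ReflTransGen.refl
      · exact absurd hc' (by simp)

lemma cover_step (hpo : IsPartialOrder (Fin d) r) {C₀ C : Finset (Fin d)}
    (hmax : IsMaxChain (rC r ℓ) (C₀ : Set (Fin d)))
    (hsub : C ⊆ C₀) (hup : ∀ x ∈ C₀, ∀ y ∈ C, rC r ℓ y x → x ∈ C)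
    {b b' : Fin d} (hb : b ∈ C) (hbmin : ∀ c ∈ C, rC r ℓ b c)
    (hb' : b' ∈ C.erase b) (hb'min : ∀ c ∈ C.erase b, rC r ℓ b' c) :
    covRel (rC r ℓ) b b' := by
  classical
  refine ⟨hbmin b' (Finset.mem_of_mem_erase hb'), (Finset.ne_of_mem_erase hb').symm, ?_⟩
  intro c hbc hcb'
  by_cases hcC0 : c ∈ C₀
  · have hcC : c ∈ C := hup c hcC0 b hb hbc
    by_cases hcb : c = b
    · exact Or.inl hcb
    · exact Or.inr (rC_antisymm hpo hcb' (hb'min c (Finset.mem_erase.mpr ⟨hcb, hcC⟩)))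
  · exfalso
    have hchain : IsChain (rC r ℓ) (insert c (C₀ : Set (Fin d))) := by
      apply hmax.1.insert
      intro z hz hzc
      have hzC0 : z ∈ C₀ := hz
      have hbC0 : b ∈ C₀ := hsub hb
      have hb'C0 : b' ∈ C₀ := hsub (Finset.mem_of_mem_erase hb')
      rcases eq_or_ne z b with rfl | hzb
      · exact Or.inr hbc
      rcases eq_or_ne z b' with rfl | hzb'
      · exact Or.inl hcb'
      rcases hmax.1 hz (by exact hbC0) hzb with hc1 | hc1
      · exact Or.inr (hc1.trans hbc)
      · rcases hmax.1 hz (by exact hb'C0) hzb' with hc2 | hc2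
        · have hzC : z ∈ C := hup z hzC0 b hb hc1
          have : rC r ℓ b' z := hb'min z (Finset.mem_erase.mpr ⟨hzb, hzC⟩)
          exact absurd (rC_antisymm hpo hc2 this) hzb'
        · exact Or.inl (hcb'.trans hc2)
    have heq := hmax.2 hchain (Set.subset_insert _ _)
    exact hcC0 (Set.insert_eq_self.mp heq.symm)

/-- telescoping along a maximal chain, for any function glued along chain-edges -/
lemma tel (hpo : IsPartialOrder (Fin d) r) {C₀ : Finset (Fin d)}
    (hmax : IsMaxChain (rC r ℓ) (C₀ : Set (Fin d)))
    (ψ : Fin d × Bool → ℝ) (hstep : ∀ u w, cE r ℓ u w → ψ (w, false) = ψ (u, true)) :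
    ∀ n (C : Finset (Fin d)), C.card ≤ n → C.Nonempty → C ⊆ C₀ →
      (∀ x ∈ C₀, ∀ y ∈ C, rC r ℓ y x → x ∈ C) →
      ∀ b t, b ∈ C → t ∈ C → (∀ c ∈ C, rC r ℓ b c) → (∀ c ∈ C, rC r ℓ c t) →
      ∑ x ∈ C, (ψ (x, true) - ψ (x, false)) = ψ (t, true) - ψ (b, false) := by
  classical
  intro n
  induction n with
  | zero =>
    intro C hcard hne
    rw [Nat.le_zero, Finset.card_eq_zero] at hcard
    subst hcard
    exact absurd hne (by simp)
  | succ n ih =>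
    intro C hcard hne hsub hup b t hb ht hbmin htmax
    by_cases hC' : (C.erase b).Nonempty
    · have hchC : IsChain (rC r ℓ) ((C.erase b : Finset (Fin d)) : Set (Fin d)) := by
        refine IsChain.mono ?_ hmax.1
        intro z hz
        exact hsub (Finset.mem_of_mem_erase hz)
      obtain ⟨b', hb', hb'min⟩ := chain_min hpo hC' hchC
      have hcov := cover_step hpo hmax hsub hup hb hbmin hb' hb'min
      have hcE := cover_rC hpo hcov
      have htb : t ≠ b := by
        rintro rfl
        obtain ⟨z, hz⟩ := hC'
        have h1 : rC r ℓ t z := hbmin z (Finset.mem_of_mem_erase hz)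
        have h2 : rC r ℓ z t := htmax z (Finset.mem_of_mem_erase hz)
        exact (Finset.ne_of_mem_erase hz) (rC_antisymm hpo h2 h1)
      have ht' : t ∈ C.erase b := Finset.mem_erase.mpr ⟨htb, ht⟩
      have hupC' : ∀ x ∈ C₀, ∀ y ∈ C.erase b, rC r ℓ y x → x ∈ C.erase b := by
        intro x hx y hy hyx
        have hxC : x ∈ C := hup x hx y (Finset.mem_of_mem_erase hy) hyx
        refine Finset.mem_erase.mpr ⟨?_, hxC⟩
        rintro rfl
        have : rC r ℓ x y := hbmin y (Finset.mem_of_mem_erase hy)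
        exact (Finset.ne_of_mem_erase hy) (rC_antisymm hpo (by exact hyx) this)
      have hcard' : (C.erase b).card ≤ n := by
        have h1 := Finset.card_erase_of_mem hb
        have h2 : 1 ≤ C.card := Finset.card_pos.mpr hne
        omega
      have hIH := ih (C.erase b) hcard' hC'
        ((Finset.erase_subset _ _).trans hsub) hupC' b' t hb' ht' hb'min
        (fun c hc => htmax c (Finset.mem_of_mem_erase hc))
      have hsumsplit := Finset.add_sum_erase C (fun x => ψ (x, true) - ψ (x, false)) hb
      rw [← hsumsplit, hIH, hstep _ _ hcE]
      ring
    · have hCb : C = {b} := by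
        refine Finset.eq_singleton_iff_unique_mem.mpr ⟨hb, fun x hx => ?_⟩
        by_contra hxb
        exact hC' ⟨x, Finset.mem_erase.mpr ⟨hxb, hx⟩⟩
      have htb : t = b := by
        have := ht
        rw [hCb, Finset.mem_singleton] at this
        exact this
      subst htb
      rw [hCb, Finset.sum_singleton]

lemma glueBase_int (hpo : IsPartialOrder (Fin d) r) (hforest : (hasseGraph r).IsAcyclic)
    {x y : Fin d × Bool} (h : glueBase r ℓ v x y) :
    ∃ n : ℤ, mu r ℓ v y - mu r ℓ v x = (n : ℝ) := by
  rcases h with ⟨i, hi, rfl, rfl⟩ | ⟨u, w, huw, rfl, rfl⟩ | ⟨u, w, ho, hvv, hc⟩ |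
    ⟨C, b, t, hmax, hsum, hb, ht, hbmin, htmax, rfl, rfl⟩
  · rcases hi with h0 | h1
    · exact ⟨0, by rw [mu_vertex, h0]; norm_num⟩
    · exact ⟨1, by rw [mu_vertex, h1]; norm_num⟩
  · exact ⟨0, by rw [mu_cE hpo hforest huw]; norm_num⟩
  · rcases hc with ⟨rfl, rfl⟩ | ⟨rfl, rfl⟩
    · exact ⟨0, by rw [mu_oE_plus hpo hforest ho]; norm_num⟩
    · exact ⟨0, by rw [mu_oE_minus hpo hforest ho hvv]; norm_num⟩
  · refine ⟨1, ?_⟩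
    have hne : C.Nonempty := ⟨b, hb⟩
    have htel := tel hpo hmax (mu r ℓ v) (fun u w h => mu_cE hpo hforest h)
      C.card C le_rfl hne (subset_refl C) (fun x hx _ _ _ => hx) b t hb ht hbmin htmax
    have h2 : ∑ x ∈ C, (mu r ℓ v (x, true) - mu r ℓ v (x, false)) = ∑ x ∈ C, v x :=
      Finset.sum_congr rfl (fun x _ => mu_vertex x)
    rw [h2, hsum] at htel
    rw [← htel]
    norm_num

lemma glue_int (hpo : IsPartialOrder (Fin d) r) (hforest : (hasseGraph r).IsAcyclic)
    {x y : Fin d × Bool} (h : glue r ℓ v x y) :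
    ∃ n : ℤ, mu r ℓ v y - mu r ℓ v x = (n : ℝ) := by
  induction h with
  | refl => exact ⟨0, by norm_num⟩
  | tail _ hadj ih =>
    obtain ⟨n, hn⟩ := ih
    rcases hadj with hbase | hbase
    · obtain ⟨m, hm⟩ := glueBase_int hpo hforest hbase
      exact ⟨n + m, by push_cast; linarith⟩
    · obtain ⟨m, hm⟩ := glueBase_int hpo hforest hbase
      exact ⟨n - m, by push_cast; linarith⟩

/-- along a tight order-path, nodes are glued at both levels -/
lemma order_tight_glue
    (hOrd : ∀ i j, Relation.ReflTransGen (oE r ℓ) i j → v j ≤ v i)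
    {i j : Fin d} (h : Relation.ReflTransGen (oE r ℓ) i j) (hvij : v i = v j) :
    glue r ℓ v (i, true) (j, true) ∧ glue r ℓ v (i, false) (j, false) := by
  induction h using Relation.ReflTransGen.head_induction_on with
  | refl => exact ⟨Relation.ReflTransGen.refl, Relation.ReflTransGen.refl⟩
  | head hstep hrest ih =>
    rename_i a c
    have h1 : v c ≤ v a := hOrd a c (Relation.ReflTransGen.single hstep)
    have h2 : v j ≤ v c := hOrd c j hrest
    have hac : v a = v c := le_antisymm (hvij ▸ h2) h1
    have hcj : v c = v j := le_antisymm (hac ▸ hvij ▸ le_refl (v j)) h2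
    obtain ⟨g1, g2⟩ := ih hcj
    have e1 : glueAdj r ℓ v (a, true) (c, true) :=
      Or.inl (Or.inr (Or.inr (Or.inl ⟨a, c, hstep, hac, Or.inl ⟨rfl, rfl⟩⟩)))
    have e2 : glueAdj r ℓ v (a, false) (c, false) :=
      Or.inl (Or.inr (Or.inr (Or.inl ⟨a, c, hstep, hac, Or.inr ⟨rfl, rfl⟩⟩)))
    exact ⟨(Relation.ReflTransGen.single e1).trans g1,
      (Relation.ReflTransGen.single e2).trans g2⟩

end Lemmas

end OC15

/-- if the Hasse diagram of `P` is a forest, then for every edge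
partition `ℓ` every vertex of the order-chain polytope has all coordinates in `{0,1}`. -/
theorem stmt_15 (d : ℕ) (r : Fin d → Fin d → Prop) (hpo : IsPartialOrder (Fin d) r)
    (hforest : (hasseGraph r).IsAcyclic) (ℓ : Fin d → Fin d → Bool) :
    ∀ v ∈ Set.extremePoints ℝ
        (orderPolytope (genOrd fun a b : Fin d => covRel r a b ∧ ℓ a b = true) ∩
         chainPolytope (genOrd fun a b : Fin d => covRel r a b ∧ ℓ a b = false)),
      ∀ k : Fin d, v k = 0 ∨ v k = 1 := by
  classical
  intro v hv k
  by_contra hk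
  push_neg at hk
  obtain ⟨hk0, hk1⟩ := hk
  obtain ⟨hvS, hext⟩ := hv
  obtain ⟨hvO, hvC⟩ := hvS
  have hB : ∀ i, 0 ≤ v i ∧ v i ≤ 1 := hvO.1
  have hOrd : ∀ i j, Relation.ReflTransGen (OC15.oE r ℓ) i j → v j ≤ v i := hvO.2
  have hCh : ∀ C : Finset (Fin d), IsMaxChain (OC15.rC r ℓ) (C : Set (Fin d)) →
      ∑ i ∈ C, v i ≤ 1 := hvC.2
  -- the perturbation direction
  set φ : Fin d × Bool → ℝ := fun x => if OC15.glue r ℓ v (k, true) x then 1 else 0 with hφ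
  set w : Fin d → ℝ := fun i => φ (i, true) - φ (i, false) with hw
  have hφinv : ∀ x y, OC15.glueAdj r ℓ v x y → φ x = φ y := by
    intro x y hxy
    have hiff : OC15.glue r ℓ v (k, true) x ↔ OC15.glue r ℓ v (k, true) y :=
      ⟨fun h => h.tail hxy, fun h => h.tail (OC15.glueAdj_symm hxy)⟩
    simp only [hφ]
    split_ifs with h1 h2 h2
    · rfl
    · exact absurd (hiff.mp h1) h2
    · exact absurd (hiff.mpr h2) h1
    · rfl
  have hφglue : ∀ x y, OC15.glue r ℓ v x y → φ x = φ y := by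
    intro x y hxy
    induction hxy with
    | refl => rfl
    | tail _ hadj ih => exact ih.trans (hφinv _ _ hadj)
  have hφ01 : ∀ x, φ x = 0 ∨ φ x = 1 := by
    intro x
    simp only [hφ]
    split_ifs
    · exact Or.inr rfl
    · exact Or.inl rfl
  have hwb : ∀ i, |w i| ≤ 1 := by
    intro i
    simp only [hw]
    rcases hφ01 (i, true) with h1 | h1 <;> rcases hφ01 (i, false) with h2 | h2 <;>
      rw [h1, h2] <;> norm_num
  have hwk : w k = 1 := by
    have hkf : ¬ OC15.glue r ℓ v (k, true) (k, false) := by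
      intro hg
      obtain ⟨n, hn⟩ := OC15.glue_int hpo hforest hg
      have hv' := OC15.mu_vertex (r := r) (ℓ := ℓ) (v := v) k
      have h0 : 0 < v k := lt_of_le_of_ne (hB k).1 (Ne.symm hk0)
      have h1 : v k < 1 := lt_of_le_of_ne (hB k).2 hk1
      have hna : ((n : ℝ)) < 0 := by linarith
      have hnb : (-1 : ℝ) < (n : ℝ) := by linarith
      have hna' : n < 0 := by exact_mod_cast hna
      have hnb' : (-1 : ℤ) < n := by exact_mod_cast hnb
      omega
    simp only [hw, hφ]
    rw [if_pos (show OC15.glue r ℓ v (k, true) (k, true) from Relation.ReflTransGen.refl),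
      if_neg hkf]
    norm_num
  have hint : ∀ i, v i = 0 ∨ v i = 1 → w i = 0 := by
    intro i hi
    have : OC15.glueAdj r ℓ v (i, false) (i, true) :=
      Or.inl (Or.inl ⟨i, hi, rfl, rfl⟩)
    have := hφinv _ _ this
    simp only [hw]
    rw [this]
    ring
  have hOrdtight : ∀ i j, Relation.ReflTransGen (OC15.oE r ℓ) i j → v i = v j → w i = w j := by
    intro i j hij hvij
    obtain ⟨g1, g2⟩ := OC15.order_tight_glue hOrd hij hvij
    simp only [hw]
    rw [hφglue _ _ g1, hφglue _ _ g2]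
  have hChtight : ∀ C : Finset (Fin d), IsMaxChain (OC15.rC r ℓ) (C : Set (Fin d)) →
      (∑ i ∈ C, v i) = 1 → ∑ x ∈ C, w x = 0 := by
    intro C hmaxC hsum
    have hne : C.Nonempty := by
      rcases C.eq_empty_or_nonempty with rfl | h
      · simp at hsum
      · exact h
    obtain ⟨b, hb, hbmin⟩ := OC15.chain_min hpo hne hmaxC.1
    obtain ⟨t, ht, htmax⟩ := OC15.chain_max hpo hne hmaxC.1
    have htel := OC15.tel hpo hmaxC φ
      (fun u w' hcw => (hφinv _ _ (Or.inl (Or.inr (Or.inl ⟨u, w', hcw, rfl, rfl⟩)))).symm)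
      C.card C le_rfl hne (subset_refl C) (fun x hx _ _ _ => hx) b t hb ht hbmin htmax
    have hglue4 : OC15.glueAdj r ℓ v (b, false) (t, true) :=
      Or.inl (Or.inr (Or.inr (Or.inr ⟨C, b, t, hmaxC, hsum, hb, ht, hbmin, htmax, rfl, rfl⟩)))
    have hbt := hφinv _ _ hglue4
    have hsw : ∑ x ∈ C, w x = ∑ x ∈ C, (φ (x, true) - φ (x, false)) :=
      Finset.sum_congr rfl (fun x _ => by simp only [hw])
    rw [hsw, htel, hbt]
    ring
  -- the finite set of slacks
  set F : Finset ℝ := insert 1 (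
    ((Finset.univ.image fun i : Fin d => if v i = 0 then (1:ℝ) else v i) ∪
     (Finset.univ.image fun i : Fin d => if v i = 1 then (1:ℝ) else 1 - v i) ∪
     (Finset.univ.image fun p : Fin d × Fin d => if v p.2 < v p.1 then v p.1 - v p.2 else 1) ∪
     ((Finset.univ : Finset (Finset (Fin d))).image
        fun C => if (∑ i ∈ C, v i) < 1 then 1 - ∑ i ∈ C, v i else 1))) with hF
  have hFne : F.Nonempty := ⟨1, Finset.mem_insert_self _ _⟩
  set m := F.min' hFne with hm
  have hFpos : ∀ x ∈ F, (0:ℝ) < x := by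
    intro x hx
    rw [hF] at hx
    rcases Finset.mem_insert.mp hx with rfl | hx
    · norm_num
    rcases Finset.mem_union.mp hx with hx | hx
    · rcases Finset.mem_union.mp hx with hx | hx
      · rcases Finset.mem_union.mp hx with hx | hx
        · obtain ⟨i, _, rfl⟩ := Finset.mem_image.mp hx
          by_cases h0 : v i = 0
          · rw [if_pos h0]; norm_num
          · rw [if_neg h0]; exact lt_of_le_of_ne (hB i).1 (Ne.symm h0)
        · obtain ⟨i, _, rfl⟩ := Finset.mem_image.mp hx
          by_cases h1 : v i = 1
          · rw [if_pos h1]; norm_num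
          · rw [if_neg h1]
            have := lt_of_le_of_ne (hB i).2 h1
            linarith
      · obtain ⟨p, _, rfl⟩ := Finset.mem_image.mp hx
        by_cases hlt : v p.2 < v p.1
        · rw [if_pos hlt]; linarith
        · rw [if_neg hlt]; norm_num
    · obtain ⟨C, _, rfl⟩ := Finset.mem_image.mp hx
      by_cases hlt : (∑ i ∈ C, v i) < 1
      · rw [if_pos hlt]; linarith
      · rw [if_neg hlt]; norm_num
  have hmpos : 0 < m := hFpos m (F.min'_mem hFne)
  have hmF1 : ∀ i, v i ≠ 0 → m ≤ v i := by
    intro i h0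
    apply Finset.min'_le
    rw [hF]
    apply Finset.mem_insert_of_mem
    refine Finset.mem_union_left _ (Finset.mem_union_left _ (Finset.mem_union_left _ ?_))
    exact Finset.mem_image.mpr ⟨i, Finset.mem_univ i, by rw [if_neg h0]⟩
  have hmF2 : ∀ i, v i ≠ 1 → m ≤ 1 - v i := by
    intro i h1
    apply Finset.min'_le
    rw [hF]
    apply Finset.mem_insert_of_mem
    refine Finset.mem_union_left _ (Finset.mem_union_left _ (Finset.mem_union_right _ ?_))
    exact Finset.mem_image.mpr ⟨i, Finset.mem_univ i, by rw [if_neg h1]⟩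
  have hmF3 : ∀ i j : Fin d, v j < v i → m ≤ v i - v j := by
    intro i j hlt
    apply Finset.min'_le
    rw [hF]
    apply Finset.mem_insert_of_mem
    refine Finset.mem_union_left _ (Finset.mem_union_right _ ?_)
    exact Finset.mem_image.mpr ⟨(i, j), Finset.mem_univ _, by rw [if_pos hlt]⟩
  have hmF4 : ∀ C : Finset (Fin d), (∑ i ∈ C, v i) < 1 → m ≤ 1 - ∑ i ∈ C, v i := by
    intro C hlt
    apply Finset.min'_le
    rw [hF]
    apply Finset.mem_insert_of_mem
    refine Finset.mem_union_right _ ?_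
    exact Finset.mem_image.mpr ⟨C, Finset.mem_univ _, by rw [if_pos hlt]⟩
  -- epsilon
  set ε := m / (2 * ((d : ℝ) + 1)) with hε
  have hdpos : (0:ℝ) < 2 * ((d : ℝ) + 1) := by positivity
  have hεpos : 0 < ε := by rw [hε]; positivity
  have hkey : ε * (2 * ((d : ℝ) + 1)) = m := div_mul_cancel₀ m (ne_of_gt hdpos)
  have hdnn : (0:ℝ) ≤ (d : ℝ) := Nat.cast_nonneg d
  have hεd : ε * (d : ℝ) ≤ m / 2 := by nlinarith
  have hεhalf : ε ≤ m / 2 := by nlinarith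
  have habsW : ∀ C : Finset (Fin d), |∑ x ∈ C, w x| ≤ (d : ℝ) := by
    intro C
    calc |∑ x ∈ C, w x| ≤ ∑ x ∈ C, |w x| := Finset.abs_sum_le_sum_abs _ _
      _ ≤ ∑ _x ∈ C, (1:ℝ) := Finset.sum_le_sum (fun x _ => hwb x)
      _ = (C.card : ℝ) := by simp
      _ ≤ (d : ℝ) := by
          have := Finset.card_le_univ C
          rw [Fintype.card_fin] at this
          exact_mod_cast this
  -- the two perturbed points are members
  have hmem : ∀ η : ℝ, |η| ≤ ε → (fun i => v i + η * w i) ∈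
      (orderPolytope (genOrd fun a b : Fin d => covRel r a b ∧ ℓ a b = true) ∩
       chainPolytope (genOrd fun a b : Fin d => covRel r a b ∧ ℓ a b = false)) := by
    intro η hη
    have hηw : ∀ i, |η * w i| ≤ ε := by
      intro i
      rw [abs_mul]
      calc |η| * |w i| ≤ ε * 1 :=
        mul_le_mul hη (hwb i) (abs_nonneg _) hεpos.le
      _ = ε := by ring
    have hbounds : ∀ i, 0 ≤ v i + η * w i ∧ v i + η * w i ≤ 1 := by
      intro i
      by_cases hi : v i = 0 ∨ v i = 1
      · rw [hint i hi]
        rcases hi with h | h <;> rw [h] <;> norm_num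
      · push_neg at hi
        have h1 : m ≤ v i := hmF1 i hi.1
        have h2 : m ≤ 1 - v i := hmF2 i hi.2
        have h3 := hηw i
        have h4 := abs_le.mp h3
        constructor <;> linarith
    refine ⟨⟨hbounds, ?_⟩, ⟨fun i => (hbounds i).1, ?_⟩⟩
    · -- order constraints
      intro i j hij
      show v j + η * w j ≤ v i + η * w i
      have hji : v j ≤ v i := hOrd i j hij
      rcases eq_or_lt_of_le hji with heq | hlt
      · have hwij : w i = w j := hOrdtight i j hij heq.symm
        rw [hwij, heq]
      · have h1 : m ≤ v i - v j := hmF3 i j hlt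
        have h2 := abs_le.mp (hηw i)
        have h3 := abs_le.mp (hηw j)
        have : 2 * ε ≤ m := by linarith
        linarith
    · -- chain constraints
      intro C hmaxC
      show ∑ i ∈ C, (v i + η * w i) ≤ 1
      have hle := hCh C hmaxC
      have hsplit : ∑ i ∈ C, (v i + η * w i) = (∑ i ∈ C, v i) + η * ∑ i ∈ C, w i := by
        rw [Finset.sum_add_distrib, Finset.mul_sum]
      rcases eq_or_lt_of_le hle with heq | hlt
      · rw [hsplit, hChtight C hmaxC heq, heq]
        ring_nf
        norm_num
      · have h1 : m ≤ 1 - ∑ i ∈ C, v i := hmF4 C hlt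
        have h2 : |η * ∑ i ∈ C, w i| ≤ ε * (d : ℝ) := by
          rw [abs_mul]
          apply mul_le_mul hη (habsW C) (abs_nonneg _) hεpos.le
        have h3 := abs_le.mp h2
        rw [hsplit]
        nlinarith
  have h1 := hmem ε (by rw [abs_of_pos hεpos])
  have h2 := hmem (-ε) (by rw [abs_neg, abs_of_pos hεpos])
  have hseg : v ∈ openSegment ℝ (fun i => v i + ε * w i) (fun i => v i + (-ε) * w i) := by
    refine ⟨1/2, 1/2, by norm_num, by norm_num, by norm_num, ?_⟩
    funext i
    simp only [Pi.add_apply, Pi.smul_apply, smul_eq_mul]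
    ring
  have he1 := hext h1 h2 hseg
  have hfk : v k + ε * w k = v k := congrFun he1 k
  rw [hwk] at hfk
  have : ε = 0 := by linarith
  rw [this] at hεpos
  exact lt_irrefl 0 hεpos
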